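/- Let (X, dist) be a metric space and (μ_t)_{t>0} a family of Borel probability measures on X satisfying the large deviation upper bound with rate function I, where I : X → [0,∞] is lower semicontinuous with compact sublevel sets. Let Φ : X → ℝ be bounded and continuous and let F ⊆ X be closed. Then limsup_{t→0⁺} t · log ∫_F exp(−Φ(x)/t) dμ_t(x) ≤ −inf_{x ∈ F} (Φ(x) + I(x)). -/

import Mathlib

open MeasureTheory Filter
open scoped ENNReal

namespace VaradhanAux

lemma ereal_le_of_forall_add {a b : EReal} (h : ∀ δ : ℝ, 0 < δ → a ≤ b + δ) : a ≤ b := by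
  induction b with
  | bot => simpa using h 1 one_pos
  | coe y =>
    by_contra hc
    push_neg at hc
    induction a with
    | bot => exact absurd hc (by simp)
    | coe z =>
      have hzy : y < z := by exact_mod_cast hc
      have h1 := h ((z - y) / 2) (by linarith)
      rw [← EReal.coe_add] at h1
      have : z ≤ y + (z - y) / 2 := by exact_mod_cast h1
      linarith
    | top =>
      have h1 := h 1 one_pos
      rw [← EReal.coe_add] at h1
      exact (EReal.coe_lt_top (y + 1)).not_ge h1
  | top => exact le_top

lemma ereal_mul_add_real {t : ℝ} (ht : 0 < t) (r : ℝ) (s : EReal) :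
    (t : EReal) * ((r : EReal) + s) = (t : EReal) * r + (t : EReal) * s := by
  induction s with
  | bot => rw [EReal.add_bot, EReal.coe_mul_bot_of_pos ht, EReal.add_bot]
  | coe y => norm_cast; ring
  | top =>
    rw [EReal.coe_add_top, EReal.coe_mul_top_of_pos ht, ← EReal.coe_mul, EReal.coe_add_top]

lemma tendsto_coe_mul_const (c : ℝ) :
    Tendsto (fun t : ℝ => (t : EReal) * (c : EReal)) (nhdsWithin 0 (Set.Ioi 0)) (nhds 0) := by
  have h : Tendsto (fun t : ℝ => t * c) (nhdsWithin 0 (Set.Ioi 0)) (nhds 0) := by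
    have := (continuous_mul_right c).tendsto (0 : ℝ)
    simpa using this.mono_left nhdsWithin_le_nhds
  have h2 : Tendsto (fun t : ℝ => ((t * c : ℝ) : EReal)) (nhdsWithin 0 (Set.Ioi 0))
      (nhds ((0 : ℝ) : EReal)) := EReal.tendsto_coe.2 h
  simpa [EReal.coe_mul] using h2


lemma limsup_tmul_log_add (u v : ℝ → ℝ≥0∞) :
    limsup (fun t : ℝ => (t : EReal) * ENNReal.log (u t + v t)) (nhdsWithin 0 (Set.Ioi 0))
      ≤ max (limsup (fun t : ℝ => (t : EReal) * ENNReal.log (u t)) (nhdsWithin 0 (Set.Ioi 0)))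
          (limsup (fun t : ℝ => (t : EReal) * ENNReal.log (v t)) (nhdsWithin 0 (Set.Ioi 0))) := by
  have hpt : ∀ᶠ t : ℝ in nhdsWithin 0 (Set.Ioi 0),
      (t : EReal) * ENNReal.log (u t + v t)
        ≤ (t : EReal) * ((Real.log 2 : ℝ) : EReal)
          + max ((t : EReal) * ENNReal.log (u t)) ((t : EReal) * ENNReal.log (v t)) := by
    filter_upwards [self_mem_nhdsWithin] with t ht
    have ht' : (0 : ℝ) < t := ht
    have h1 : u t + v t ≤ 2 * max (u t) (v t) := by
      rw [two_mul]; exact add_le_add (le_max_left _ _) (le_max_right _ _)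
    have h2 : ENNReal.log (u t + v t) ≤ ENNReal.log 2 + ENNReal.log (max (u t) (v t)) := by
      rw [← ENNReal.log_mul_add]; exact ENNReal.log_monotone h1
    have hlog2 : ENNReal.log 2 = ((Real.log 2 : ℝ) : EReal) := by
      rw [show (2 : ℝ≥0∞) = ENNReal.ofReal 2 by simp, ENNReal.log_ofReal_of_pos two_pos]
    have htpos : (0 : EReal) ≤ (t : EReal) := by exact_mod_cast ht'.le
    calc (t : EReal) * ENNReal.log (u t + v t)
        ≤ (t : EReal) * (ENNReal.log 2 + ENNReal.log (max (u t) (v t))) :=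
          mul_le_mul_of_nonneg_left h2 htpos
      _ = (t : EReal) * ((Real.log 2 : ℝ) : EReal)
            + (t : EReal) * ENNReal.log (max (u t) (v t)) := by
          rw [hlog2, ereal_mul_add_real ht']
      _ = (t : EReal) * ((Real.log 2 : ℝ) : EReal)
            + max ((t : EReal) * ENNReal.log (u t)) ((t : EReal) * ENNReal.log (v t)) := by
          congr 1
          have hmono : Monotone fun s : EReal => (t : EReal) * s :=
            fun a b hab => mul_le_mul_of_nonneg_left hab htpos
          rw [ENNReal.log_monotone.map_max, hmono.map_max]
  have h0 : limsup (fun t : ℝ => (t : EReal) * ((Real.log 2 : ℝ) : EReal))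
      (nhdsWithin 0 (Set.Ioi 0)) = 0 := (tendsto_coe_mul_const _).limsup_eq
  calc limsup (fun t : ℝ => (t : EReal) * ENNReal.log (u t + v t)) (nhdsWithin 0 (Set.Ioi 0))
      ≤ limsup (fun t : ℝ => (t : EReal) * ((Real.log 2 : ℝ) : EReal)
          + max ((t : EReal) * ENNReal.log (u t)) ((t : EReal) * ENNReal.log (v t)))
          (nhdsWithin 0 (Set.Ioi 0)) := limsup_le_limsup hpt
    _ ≤ limsup (fun t : ℝ => (t : EReal) * ((Real.log 2 : ℝ) : EReal)) (nhdsWithin 0 (Set.Ioi 0))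
          + limsup (fun t : ℝ =>
              max ((t : EReal) * ENNReal.log (u t)) ((t : EReal) * ENNReal.log (v t)))
            (nhdsWithin 0 (Set.Ioi 0)) :=
        EReal.limsup_add_le (Or.inl (by simp [h0])) (Or.inl (by simp [h0]))
    _ = _ := by rw [h0, zero_add, limsup_max]

lemma limsup_tmul_log_sum (s : Finset ℕ) (g : ℕ → ℝ → ℝ≥0∞) :
    limsup (fun t : ℝ => (t : EReal) * ENNReal.log (∑ j ∈ s, g j t)) (nhdsWithin 0 (Set.Ioi 0))
      ≤ s.sup (fun j => limsup (fun t : ℝ => (t : EReal) * ENNReal.log (g j t))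
          (nhdsWithin 0 (Set.Ioi 0))) := by
  induction s using Finset.cons_induction with
  | empty =>
    simp only [Finset.sum_empty, ENNReal.log_zero, Finset.sup_empty]
    refine limsup_le_of_le (by isBoundedDefault) ?_
    filter_upwards [self_mem_nhdsWithin] with t ht
    rw [EReal.coe_mul_bot_of_pos (by exact_mod_cast ht : (0:ℝ) < t)]
  | cons a s ha ih =>
    simp only [Finset.sum_cons, Finset.sup_cons]
    exact (limsup_tmul_log_add _ _).trans (max_le_max le_rfl ih)

lemma lintegral_finset_biUnion_le {X : Type*} [MeasurableSpace X] (ν : Measure X)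
    (f : X → ℝ≥0∞) (s : Finset ℕ) (A : ℕ → Set X) :
    ∫⁻ x in ⋃ j ∈ s, A j, f x ∂ν ≤ ∑ j ∈ s, ∫⁻ x in A j, f x ∂ν := by
  induction s using Finset.cons_induction with
  | empty => simp
  | cons a s ha ih =>
    rw [Finset.sum_cons]
    have : (⋃ j ∈ Finset.cons a s ha, A j) = A a ∪ ⋃ j ∈ s, A j := by
      simp [Finset.cons_eq_insert, Set.biUnion_insert]
    rw [this]
    exact (lintegral_union_le _ _ _).trans (add_le_add le_rfl ih)

end VaradhanAux


/-- Varadhan upper bound: if `(μ_t)` satisfies the large deviation upper bound with a good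
rate function `I`, `Φ` is bounded continuous and `F` is closed, then
`limsup_{t→0⁺} t log ∫_F exp(−Φ/t) dμ_t ≤ −inf_F (Φ + I)`. -/
theorem varadhan_upper_bound {X : Type*} [MetricSpace X] [MeasurableSpace X] [BorelSpace X]
    (μ : ℝ → Measure X) (hprob : ∀ t > (0:ℝ), IsProbabilityMeasure (μ t))
    (I : X → ℝ≥0∞) (hlsc : LowerSemicontinuous I)
    (hcomp : ∀ c : ℝ≥0∞, c ≠ ⊤ → IsCompact {x | I x ≤ c})
    (hupper : ∀ C : Set X, IsClosed C →
      Filter.limsup (fun t : ℝ => (t : EReal) * ENNReal.log (μ t C))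
          (nhdsWithin 0 (Set.Ioi 0))
        ≤ -(⨅ x ∈ C, (I x : EReal)))
    (Φ : X → ℝ) (hΦcont : Continuous Φ) (hΦbdd : ∃ M : ℝ, ∀ x, |Φ x| ≤ M)
    (F : Set X) (hF : IsClosed F) :
    Filter.limsup (fun t : ℝ =>
        (t : EReal) * ENNReal.log (∫⁻ x in F, ENNReal.ofReal (Real.exp (-Φ x / t)) ∂ (μ t)))
        (nhdsWithin 0 (Set.Ioi 0))
      ≤ -(⨅ x ∈ F, ((Φ x : EReal) + (I x : EReal))) := by
  classical
  obtain ⟨M, hM⟩ := hΦbdd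
  set L : EReal := ⨅ x ∈ F, ((Φ x : EReal) + (I x : EReal)) with hLdef
  refine VaradhanAux.ereal_le_of_forall_add (fun δ hδ => ?_)
  set N : ℕ := ⌊(2 * M) / δ⌋₊ + 1 with hNdef
  set a : ℕ → ℝ := fun j => -M + j * δ with hadef
  set C : ℕ → Set X := fun j => F ∩ Φ ⁻¹' (Set.Icc (a j) (a j + δ)) with hCdef
  have hCclosed : ∀ j, IsClosed (C j) := fun j => hF.inter (isClosed_Icc.preimage hΦcont)
  have hCsubF : ∀ j, C j ⊆ F := fun j => Set.inter_subset_left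
  have hCPhi : ∀ j, ∀ x ∈ C j, a j ≤ Φ x ∧ Φ x ≤ a j + δ := by
    intro j x hx
    exact ⟨hx.2.1, hx.2.2⟩
  -- the cover
  have hcover : F ⊆ ⋃ j ∈ Finset.range N, C j := by
    intro x hx
    have hMx := abs_le.1 (hM x)
    have hx1 : 0 ≤ Φ x + M := by linarith [hMx.1]
    set j := ⌊(Φ x + M) / δ⌋₊ with hjdef
    have hjle : (j : ℝ) ≤ (Φ x + M) / δ := Nat.floor_le (by positivity)
    have hjlt : (Φ x + M) / δ < j + 1 := Nat.lt_floor_add_one _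
    have h1 : (j : ℝ) * δ ≤ Φ x + M := by
      rw [← le_div_iff₀ hδ]; exact hjle
    have h2 : Φ x + M < ((j : ℝ) + 1) * δ := by
      rw [← div_lt_iff₀ hδ]; exact hjlt
    have hmem : x ∈ C j := by
      refine ⟨hx, Set.mem_preimage.2 (Set.mem_Icc.2 ⟨?_, ?_⟩)⟩ <;>
        · simp only [hadef]; nlinarith
    have hjN : j < N := by
      have hle2 : (Φ x + M) / δ ≤ (2 * M) / δ := by gcongr; linarith [hMx.2]
      have h3 := Nat.floor_le_floor hle2
      omega
    exact Set.mem_biUnion (Finset.mem_range.2 hjN) hmem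
  -- pointwise comparison of the integral with a finite sum
  have hsum : ∀ᶠ t : ℝ in nhdsWithin 0 (Set.Ioi 0),
      (t : EReal) * ENNReal.log (∫⁻ x in F, ENNReal.ofReal (Real.exp (-Φ x / t)) ∂ μ t)
        ≤ (t : EReal) * ENNReal.log (∑ j ∈ Finset.range N,
            ENNReal.ofReal (Real.exp (-(a j) / t)) * μ t (C j)) := by
    filter_upwards [self_mem_nhdsWithin] with t ht
    have ht' : (0 : ℝ) < t := ht
    have hint : (∫⁻ x in F, ENNReal.ofReal (Real.exp (-Φ x / t)) ∂ μ t)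
        ≤ ∑ j ∈ Finset.range N, ENNReal.ofReal (Real.exp (-(a j) / t)) * μ t (C j) := by
      calc (∫⁻ x in F, ENNReal.ofReal (Real.exp (-Φ x / t)) ∂ μ t)
          ≤ ∫⁻ x in ⋃ j ∈ Finset.range N, C j, ENNReal.ofReal (Real.exp (-Φ x / t)) ∂ μ t :=
            lintegral_mono_set hcover
        _ ≤ ∑ j ∈ Finset.range N, ∫⁻ x in C j, ENNReal.ofReal (Real.exp (-Φ x / t)) ∂ μ t :=
            VaradhanAux.lintegral_finset_biUnion_le _ _ _ _
        _ ≤ ∑ j ∈ Finset.range N, ENNReal.ofReal (Real.exp (-(a j) / t)) * μ t (C j) := by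
            apply Finset.sum_le_sum
            intro j _
            have hb : ∫⁻ x in C j, ENNReal.ofReal (Real.exp (-Φ x / t)) ∂ μ t
                ≤ ∫⁻ _ in C j, ENNReal.ofReal (Real.exp (-(a j) / t)) ∂ μ t := by
              apply setLIntegral_mono measurable_const
              intro x hx
              have h1 := (hCPhi j x hx).1
              exact ENNReal.ofReal_le_ofReal (Real.exp_le_exp.2
                (div_le_div_of_nonneg_right (by linarith) ht'.le))
            exact hb.trans_eq (setLIntegral_const _ _)
    exact mul_le_mul_of_nonneg_left (ENNReal.log_monotone hint) (by exact_mod_cast ht'.le)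
  -- per-term limsup bound
  have hperj : ∀ j ∈ Finset.range N,
      limsup (fun t : ℝ => (t : EReal) * ENNReal.log
          (ENNReal.ofReal (Real.exp (-(a j) / t)) * μ t (C j))) (nhdsWithin 0 (Set.Ioi 0))
        ≤ -L + (δ : EReal) := by
    intro j _
    have heq : ∀ᶠ t : ℝ in nhdsWithin 0 (Set.Ioi 0),
        (t : EReal) * ENNReal.log (ENNReal.ofReal (Real.exp (-(a j) / t)) * μ t (C j))
          = ((-(a j) : ℝ) : EReal) + (t : EReal) * ENNReal.log (μ t (C j)) := by
      filter_upwards [self_mem_nhdsWithin] with t ht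
      have ht' : (0 : ℝ) < t := ht
      rw [ENNReal.log_mul_add, ENNReal.log_ofReal_of_pos (Real.exp_pos _), Real.log_exp,
        VaradhanAux.ereal_mul_add_real ht', ← EReal.coe_mul, mul_comm t (-(a j) / t),
        div_mul_cancel₀ _ ht'.ne']
    have hK0 : (0 : EReal) ≤ ⨅ x ∈ C j, (I x : EReal) :=
      le_iInf fun x => le_iInf fun _ => EReal.coe_ennreal_nonneg _
    have hkey : ((-(a j) : ℝ) : EReal) + -(⨅ x ∈ C j, (I x : EReal)) ≤ -L + (δ : EReal) := by
      set K : EReal := ⨅ x ∈ C j, (I x : EReal) with hKdef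
      rcases eq_or_ne K ⊤ with hKtop | hKtop
      · rw [hKtop]
        simp
      · obtain ⟨k, hk⟩ : ∃ k : ℝ, K = (k : EReal) :=
          ⟨K.toReal, (EReal.coe_toReal hKtop (EReal.bot_lt_zero.trans_le hK0).ne').symm⟩
        have hL' : L ≤ ⨅ x ∈ C j, ((Φ x : EReal) + (I x : EReal)) :=
          iInf_le_iInf_of_subset (hCsubF j)
        have hL'' : (⨅ x ∈ C j, ((Φ x : EReal) + (I x : EReal)))
            ≤ ((a j + δ + k : ℝ) : EReal) := by
          refine VaradhanAux.ereal_le_of_forall_add (fun ε hε => ?_)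
          have hlt : K < ((k + ε : ℝ) : EReal) := by
            rw [hk]; exact_mod_cast (by linarith : k < k + ε)
          rw [hKdef] at hlt
          simp only [iInf_lt_iff] at hlt
          obtain ⟨x, hx, hxlt⟩ := hlt
          have hΦx : Φ x ≤ a j + δ := (hCPhi j x hx).2
          calc (⨅ x ∈ C j, ((Φ x : EReal) + (I x : EReal)))
              ≤ (Φ x : EReal) + (I x : EReal) := iInf₂_le x hx
            _ ≤ ((a j + δ : ℝ) : EReal) + (I x : EReal) :=
                add_le_add_left (by exact_mod_cast hΦx) _
            _ ≤ ((a j + δ : ℝ) : EReal) + ((k + ε : ℝ) : EReal) :=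
                add_le_add_right hxlt.le _
            _ = ((a j + δ + k : ℝ) : EReal) + (ε : EReal) := by norm_cast; ring
        have hLle : L ≤ ((a j + δ + k : ℝ) : EReal) := hL'.trans hL''
        have hnegL : ((-(a j + δ + k) : ℝ) : EReal) ≤ -L := by
          rw [show ((-(a j + δ + k) : ℝ) : EReal) = -((a j + δ + k : ℝ) : EReal) by norm_cast]
          exact EReal.neg_le_neg_iff.2 hLle
        calc ((-(a j) : ℝ) : EReal) + -K = ((-(a j) + -k : ℝ) : EReal) := by
              rw [hk]; norm_cast
          _ ≤ ((-(a j + δ + k) : ℝ) : EReal) + (δ : EReal) := by norm_cast; linarith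
          _ ≤ -L + (δ : EReal) := add_le_add_left hnegL _
    calc limsup (fun t : ℝ => (t : EReal) * ENNReal.log
            (ENNReal.ofReal (Real.exp (-(a j) / t)) * μ t (C j))) (nhdsWithin 0 (Set.Ioi 0))
        = limsup (fun t : ℝ => ((-(a j) : ℝ) : EReal)
            + (t : EReal) * ENNReal.log (μ t (C j))) (nhdsWithin 0 (Set.Ioi 0)) :=
          limsup_congr heq
      _ ≤ limsup (fun _ : ℝ => ((-(a j) : ℝ) : EReal)) (nhdsWithin 0 (Set.Ioi 0))
            + limsup (fun t : ℝ => (t : EReal) * ENNReal.log (μ t (C j)))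
              (nhdsWithin 0 (Set.Ioi 0)) :=
          EReal.limsup_add_le (Or.inl (by simp [limsup_const]))
            (Or.inl (by simp [limsup_const]))
      _ = ((-(a j) : ℝ) : EReal) + limsup (fun t : ℝ => (t : EReal) * ENNReal.log (μ t (C j)))
            (nhdsWithin 0 (Set.Ioi 0)) := by rw [limsup_const]
      _ ≤ ((-(a j) : ℝ) : EReal) + -(⨅ x ∈ C j, (I x : EReal)) :=
          add_le_add_right (hupper (C j) (hCclosed j)) _
      _ ≤ -L + (δ : EReal) := hkey
  -- assemble
  calc limsup (fun t : ℝ =>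
          (t : EReal) * ENNReal.log (∫⁻ x in F, ENNReal.ofReal (Real.exp (-Φ x / t)) ∂ μ t))
          (nhdsWithin 0 (Set.Ioi 0))
      ≤ limsup (fun t : ℝ => (t : EReal) * ENNReal.log (∑ j ∈ Finset.range N,
            ENNReal.ofReal (Real.exp (-(a j) / t)) * μ t (C j))) (nhdsWithin 0 (Set.Ioi 0)) :=
        limsup_le_limsup hsum
    _ ≤ (Finset.range N).sup (fun j => limsup (fun t : ℝ => (t : EReal) * ENNReal.log
          (ENNReal.ofReal (Real.exp (-(a j) / t)) * μ t (C j))) (nhdsWithin 0 (Set.Ioi 0))) :=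
        VaradhanAux.limsup_tmul_log_sum _ _
    _ ≤ -L + (δ : EReal) := Finset.sup_le hperj
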